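/- Let A and B be differential rings and ν : A → B a differential homomorphism such that B is differentially finitely generated over ν(A), and for each generator η there exist b_1, …, b_n ∈ A with b_k·η ∈ ν(A) for all k and {b_1, …, b_n} = A (the smallest radical differential ideal containing them is all of A). Then ν* : Spec^Δ B → V(ker ν) is a homeomorphism. -/

import Mathlib

/-- An ideal is a differential ideal w.r.t. a family of derivation maps `d`. -/
def IsDiffIdeal {A : Type*} [CommRing A] {k : ℕ} (d : Fin k → A → A) (I : Ideal A) : Prop :=
  ∀ i : Fin k, ∀ x ∈ I, d i x ∈ I

/-- The differential spectrum: prime differential ideals, with the Kolchin topology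
(the subspace topology induced from the Zariski topology on `PrimeSpectrum`). -/
abbrev DiffSpec {A : Type*} [CommRing A] {k : ℕ} (d : Fin k → A → A) :=
  {p : PrimeSpectrum A // IsDiffIdeal d p.asIdeal}

/-- A Keigher ring: the radical of every differential ideal is differential. -/
def IsKeigher {A : Type*} [CommRing A] {k : ℕ} (d : Fin k → A → A) : Prop :=
  ∀ I : Ideal A, IsDiffIdeal d I → IsDiffIdeal d I.radical

/-- `radDiffGen d E` is the smallest radical differential ideal containing `E`. -/
def radDiffGen {A : Type*} [CommRing A] {k : ℕ} (d : Fin k → A → A) (E : Set A) : Ideal A :=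
  sInf {I : Ideal A | E ⊆ I ∧ I.IsRadical ∧ IsDiffIdeal d I}

section Aux

variable {A B : Type*} [CommRing A] [CommRing B] {k : ℕ}
  {δA : Fin k → Derivation ℤ A A} {δB : Fin k → Derivation ℤ B B}
  {ν : A →+* B}

/-- Key "star" lemma: every element of `B` can be cleared into `ν(A)` by a
multiplier outside any given differential prime of `A`. -/
theorem star_lemma (hν : ∀ i a, ν (δA i a) = δB i (ν a))
    {m : ℕ} {η : Fin m → B}
    (hgen : ∀ S : Subring B, (∀ x ∈ S, ∀ i, δB i x ∈ S) → Set.range ν ⊆ (S : Set B) →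
      (∀ j, η j ∈ S) → S = ⊤)
    (hb : ∀ j : Fin m, ∃ (n : ℕ) (b : Fin n → A),
      (∀ l : Fin n, ν (b l) * η j ∈ Set.range ν) ∧
      radDiffGen (fun i => ⇑(δA i)) (Set.range b) = ⊤)
    (p : Ideal A) (hp : p.IsPrime) (hpd : IsDiffIdeal (fun i => ⇑(δA i)) p)
    (x : B) : ∃ a c : A, a ∉ p ∧ ν a * x = ν c := by
  have h1 : (1 : A) ∉ p := (Ideal.ne_top_iff_one p).mp hp.ne_top
  set S : Subring B :=
    { carrier := {x : B | ∃ a c : A, a ∉ p ∧ ν a * x = ν c}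
      one_mem' := ⟨1, 1, h1, by simp⟩
      zero_mem' := ⟨1, 0, h1, by simp⟩
      mul_mem' := by
        rintro x y ⟨a, c, ha, hx⟩ ⟨a', c', ha', hy⟩
        refine ⟨a * a', c * c', fun h => ((hp.mem_or_mem h).elim ha ha'), ?_⟩
        simp only [map_mul]
        linear_combination (ν a' * y) * hx + (ν c) * hy
      add_mem' := by
        rintro x y ⟨a, c, ha, hx⟩ ⟨a', c', ha', hy⟩
        refine ⟨a * a', a' * c + a * c', fun h => ((hp.mem_or_mem h).elim ha ha'), ?_⟩
        simp only [map_mul, map_add]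
        linear_combination (ν a') * hx + (ν a) * hy
      neg_mem' := by
        rintro x ⟨a, c, ha, hx⟩
        exact ⟨a, -c, ha, by simp [← hx, mul_neg]⟩ } with hS
  have hdelta : ∀ x ∈ S, ∀ i, δB i x ∈ S := by
    rintro x ⟨a, c, ha, hx⟩ i
    refine ⟨a * a, a * δA i c - δA i a * c, fun h => ((hp.mem_or_mem h).elim ha ha), ?_⟩
    have h2 : δB i (ν a * x) = δB i (ν c) := by rw [hx]
    rw [Derivation.leibniz] at h2
    simp only [smul_eq_mul, ← hν] at h2
    simp only [map_mul, map_sub]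
    linear_combination (ν a) * h2 - ν (δA i a) * hx
  have hrange : Set.range ν ⊆ (S : Set B) := by
    rintro _ ⟨a, rfl⟩
    exact ⟨1, a, h1, by simp⟩
  have heta : ∀ j, η j ∈ S := by
    intro j
    obtain ⟨n, b, hb1, hb2⟩ := hb j
    have : ¬ Set.range b ⊆ (p : Set A) := by
      intro hsub
      have hle : radDiffGen (fun i => ⇑(δA i)) (Set.range b) ≤ p :=
        sInf_le ⟨hsub, hp.isRadical, hpd⟩
      rw [hb2] at hle
      exact hp.ne_top (top_le_iff.mp hle)
    obtain ⟨y, hy⟩ := Set.not_subset.mp this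
    obtain ⟨l, rfl⟩ := hy.1
    obtain ⟨c, hc⟩ := hb1 l
    exact ⟨b l, c, hy.2, hc.symm ▸ rfl⟩
  have := hgen S hdelta hrange heta
  have hxS : x ∈ S := this ▸ Subring.mem_top x
  exact hxS

variable (ν) in
/-- The ideal of `B` induced by a differential prime `p` of `A`. -/
def qIdeal (p : Ideal A) (hp : p.IsPrime)
    (star : ∀ x : B, ∃ a c : A, a ∉ p ∧ ν a * x = ν c) : Ideal B where
  carrier := {x : B | ∃ a c : A, a ∉ p ∧ c ∈ p ∧ ν a * x = ν c}
  zero_mem' := ⟨1, 0, (Ideal.ne_top_iff_one p).mp hp.ne_top, p.zero_mem, by simp⟩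
  add_mem' := by
    rintro x y ⟨a, c, ha, hc, hx⟩ ⟨a', c', ha', hc', hy⟩
    refine ⟨a * a', a' * c + a * c', fun h => ((hp.mem_or_mem h).elim ha ha'),
      p.add_mem (p.mul_mem_left _ hc) (p.mul_mem_left _ hc'), ?_⟩
    simp only [map_mul, map_add]
    linear_combination (ν a') * hx + (ν a) * hy
  smul_mem' := by
    rintro r x ⟨a, c, ha, hc, hx⟩
    obtain ⟨a₂, c₂, ha₂, hr⟩ := star r
    refine ⟨a * a₂, c₂ * c, fun h => ((hp.mem_or_mem h).elim ha ha₂),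
      p.mul_mem_left _ hc, ?_⟩
    simp only [smul_eq_mul, map_mul]
    linear_combination (ν a * x) * hr + (ν c₂) * hx

theorem qIdeal_isPrime (p : Ideal A) (hp : p.IsPrime)
    (star : ∀ x : B, ∃ a c : A, a ∉ p ∧ ν a * x = ν c)
    (hker : RingHom.ker ν ≤ p) : (qIdeal ν p hp star).IsPrime := by
  constructor
  · rw [Ideal.ne_top_iff_one]
    rintro ⟨a, c, ha, hc, h⟩
    rw [mul_one] at h
    have : a - c ∈ RingHom.ker ν := by simp [RingHom.mem_ker, map_sub, h]
    have : a ∈ p := by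
      have := hker this
      have := p.add_mem this hc
      simpa using this
    exact ha this
  · rintro x y ⟨a, c, ha, hc, hxy⟩
    obtain ⟨a₁, c₁, ha₁, hx⟩ := star x
    obtain ⟨a₂, c₂, ha₂, hy⟩ := star y
    have key : a * c₁ * c₂ - a₁ * a₂ * c ∈ RingHom.ker ν := by
      rw [RingHom.mem_ker, map_sub]
      simp only [map_mul]
      rw [sub_eq_zero]
      linear_combination (-(ν a * ν c₂)) * hx - (ν a₁ * ν a * x) * hy + (ν a₁ * ν a₂) * hxy
    have hmem : a * c₁ * c₂ ∈ p := by
      have h2 : a₁ * a₂ * c ∈ p := p.mul_mem_left _ hc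
      have := p.add_mem (hker key) h2
      simpa using this
    rcases hp.mem_or_mem hmem with h | h
    · rcases hp.mem_or_mem h with h | h
      · exact absurd h ha
      · exact Or.inl ⟨a₁, c₁, ha₁, h, hx⟩
    · exact Or.inr ⟨a₂, c₂, ha₂, h, hy⟩

theorem qIdeal_isDiff (hν : ∀ i a, ν (δA i a) = δB i (ν a))
    (p : Ideal A) (hp : p.IsPrime)
    (star : ∀ x : B, ∃ a c : A, a ∉ p ∧ ν a * x = ν c)
    (hpd : IsDiffIdeal (fun i => ⇑(δA i)) p) :
    IsDiffIdeal (fun i => ⇑(δB i)) (qIdeal ν p hp star) := by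
  rintro i x ⟨a, c, ha, hc, hx⟩
  refine ⟨a * a, a * δA i c - δA i a * c, fun h => ((hp.mem_or_mem h).elim ha ha),
    p.sub_mem (p.mul_mem_left _ (hpd i c hc)) (p.mul_mem_left _ hc), ?_⟩
  have h2 : δB i (ν a * x) = δB i (ν c) := by rw [hx]
  rw [Derivation.leibniz] at h2
  simp only [smul_eq_mul, ← hν] at h2
  simp only [map_mul, map_sub]
  linear_combination (ν a) * h2 - ν (δA i a) * hx

theorem qIdeal_comap (p : Ideal A) (hp : p.IsPrime)
    (star : ∀ x : B, ∃ a c : A, a ∉ p ∧ ν a * x = ν c)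
    (hker : RingHom.ker ν ≤ p) : Ideal.comap ν (qIdeal ν p hp star) = p := by
  ext a'
  simp only [Ideal.mem_comap]
  constructor
  · rintro ⟨a, c, ha, hc, h⟩
    have hk : a * a' - c ∈ RingHom.ker ν := by
      rw [RingHom.mem_ker, map_sub, map_mul, h, sub_self]
    have : a * a' ∈ p := by
      have := p.add_mem (hker hk) hc
      simpa using this
    exact (hp.mem_or_mem this).resolve_left ha
  · intro h
    exact ⟨1, a', (Ideal.ne_top_iff_one p).mp hp.ne_top, h, by simp⟩

theorem qIdeal_eq (q : Ideal B) (hq : q.IsPrime)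
    (hp : (Ideal.comap ν q).IsPrime)
    (star : ∀ x : B, ∃ a c : A, a ∉ Ideal.comap ν q ∧ ν a * x = ν c) :
    qIdeal ν (Ideal.comap ν q) hp star = q := by
  ext x
  constructor
  · rintro ⟨a, c, ha, hc, h⟩
    rw [Ideal.mem_comap] at ha hc
    have : ν a * x ∈ q := h ▸ hc
    exact (hq.mem_or_mem this).resolve_left ha
  · intro hx
    obtain ⟨a, c, ha, h⟩ := star x
    have : ν c ∈ q := h ▸ q.mul_mem_left _ hx
    exact ⟨a, c, ha, Ideal.mem_comap.mpr this, h⟩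

end Aux

theorem stmt7 {A B : Type*} [CommRing A] [CommRing B] {k : ℕ}
    (δA : Fin k → Derivation ℤ A A) (δB : Fin k → Derivation ℤ B B)
    (hcommA : ∀ i j a, δA i (δA j a) = δA j (δA i a))
    (hcommB : ∀ i j b, δB i (δB j b) = δB j (δB i b))
    (ν : A →+* B) (hν : ∀ i a, ν (δA i a) = δB i (ν a))
    (m : ℕ) (η : Fin m → B)
    (hgen : ∀ S : Subring B, (∀ x ∈ S, ∀ i, δB i x ∈ S) → Set.range ν ⊆ (S : Set B) →
      (∀ j, η j ∈ S) → S = ⊤)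
    (hb : ∀ j : Fin m, ∃ (n : ℕ) (b : Fin n → A),
      (∀ l : Fin n, ν (b l) * η j ∈ Set.range ν) ∧
      radDiffGen (fun i => ⇑(δA i)) (Set.range b) = ⊤) :
    ∃ h : DiffSpec (fun i => ⇑(δB i)) ≃ₜ
        {p : DiffSpec (fun i => ⇑(δA i)) // RingHom.ker ν ≤ p.1.asIdeal},
      ∀ q, (h q).1.1.asIdeal = Ideal.comap ν q.1.asIdeal := by
  classical
  set dA : Fin k → A → A := fun i => ⇑(δA i) with hdA
  set dB : Fin k → B → B := fun i => ⇑(δB i) with hdB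
  -- star for any diff prime of A
  have star : ∀ (p : Ideal A), p.IsPrime → IsDiffIdeal dA p →
      ∀ x : B, ∃ a c : A, a ∉ p ∧ ν a * x = ν c :=
    fun p hp hpd => star_lemma hν hgen hb p hp hpd
  -- the forward map
  let X := DiffSpec dB
  let Y := {p : DiffSpec dA // RingHom.ker ν ≤ p.1.asIdeal}
  have comap_diff : ∀ q : X, IsDiffIdeal dA (Ideal.comap ν q.1.asIdeal) := by
    rintro q i a ha
    rw [Ideal.mem_comap] at ha ⊢
    show ν (δA i a) ∈ _
    rw [hν]
    exact q.2 i _ ha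
  let toF : X → Y := fun q =>
    ⟨⟨PrimeSpectrum.comap ν q.1, comap_diff q⟩, Ideal.ker_le_comap ν⟩
  -- the inverse map
  have Yprime : ∀ P : Y, P.1.1.asIdeal.IsPrime := fun P => P.1.1.isPrime
  let qId : ∀ P : Y, Ideal B := fun P =>
    qIdeal ν P.1.1.asIdeal P.1.1.isPrime (star _ P.1.1.isPrime P.1.2)
  have qId_prime : ∀ P : Y, (qId P).IsPrime := fun P =>
    qIdeal_isPrime P.1.1.asIdeal P.1.1.isPrime (star _ P.1.1.isPrime P.1.2) P.2
  let invF : Y → X := fun P =>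
    ⟨⟨qId P, qId_prime P⟩, qIdeal_isDiff hν P.1.1.asIdeal P.1.1.isPrime (star _ P.1.1.isPrime P.1.2) P.1.2⟩
  have left_inv : Function.LeftInverse invF toF := by
    intro q
    apply Subtype.ext
    apply PrimeSpectrum.ext
    exact qIdeal_eq q.1.asIdeal q.1.isPrime ((PrimeSpectrum.comap ν q.1).isPrime)
      (star _ (PrimeSpectrum.comap ν q.1).isPrime (comap_diff q))
  have right_inv : Function.RightInverse invF toF := by
    intro P
    apply Subtype.ext
    apply Subtype.ext
    apply PrimeSpectrum.ext
    exact qIdeal_comap P.1.1.asIdeal P.1.1.isPrime (star _ P.1.1.isPrime P.1.2) P.2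
  let e : X ≃ Y := ⟨toF, invF, left_inv, right_inv⟩
  have cont_to : Continuous toF := by
    apply Continuous.subtype_mk
    apply Continuous.subtype_mk
    exact (PrimeSpectrum.continuous_comap ν).comp continuous_subtype_val
  have cont_inv : Continuous invF := by
    apply Continuous.subtype_mk
    rw [TopologicalSpace.IsTopologicalBasis.continuous_iff
      PrimeSpectrum.isTopologicalBasis_basic_opens]
    rintro s ⟨x, rfl⟩
    have hset : (fun P : Y => (⟨qId P, qId_prime P⟩ : PrimeSpectrum B)) ⁻¹'
        ↑(PrimeSpectrum.basicOpen x) =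
        ⋃ (ac : A × A) (_ : ν ac.1 * x = ν ac.2),
          (fun P : Y => P.1.1) ⁻¹' ↑(PrimeSpectrum.basicOpen (ac.1 * ac.2)) := by
      ext P
      simp only [Set.mem_preimage, SetLike.mem_coe, PrimeSpectrum.mem_basicOpen,
        Set.mem_iUnion]
      constructor
      · intro hx
        obtain ⟨a, c, ha, h⟩ := star _ P.1.1.isPrime P.1.2 x
        have hc : c ∉ P.1.1.asIdeal := fun hc => hx ⟨a, c, ha, hc, h⟩
        exact ⟨(a, c), h, fun hm => (P.1.1.isPrime.mem_or_mem hm).elim ha hc⟩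
      · rintro ⟨⟨a, c⟩, h, hm⟩ ⟨a', c', ha', hc', h'⟩
        have ha : a ∉ P.1.1.asIdeal := fun hmm => hm (P.1.1.asIdeal.mul_mem_right _ hmm)
        have hc : c ∉ P.1.1.asIdeal := fun hmm => hm (P.1.1.asIdeal.mul_mem_left _ hmm)
        have hk : a' * c - a * c' ∈ RingHom.ker ν := by
          rw [RingHom.mem_ker, map_sub, map_mul, map_mul, sub_eq_zero]
          linear_combination (ν a) * h' - (ν a') * h
        have : a' * c ∈ P.1.1.asIdeal := by
          have := P.1.1.asIdeal.add_mem (P.2 hk) (P.1.1.asIdeal.mul_mem_left a hc')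
          simpa using this
        exact hc ((P.1.1.isPrime.mem_or_mem this).resolve_left ha')
    show IsOpen ((fun P : Y => (⟨qId P, qId_prime P⟩ : PrimeSpectrum B)) ⁻¹' _)
    rw [hset]
    apply isOpen_iUnion
    intro ac
    apply isOpen_iUnion
    intro _
    exact (PrimeSpectrum.basicOpen (ac.1 * ac.2)).isOpen.preimage
      (continuous_subtype_val.comp continuous_subtype_val)
  refine ⟨⟨e, cont_to, cont_inv⟩, ?_⟩
  intro q
  rfl
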